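/- Let G = (V,E) be a finite simple graph. The number of proper 3-colorings of G, i.e. functions f : V → {0,1,2} with f(u) ≠ f(v) for every edge uv of G, equals (−1)^{r(E)} · 3^{k(E)} · T(G; −2, 0). -/

import Mathlib

open SimpleGraph Finset

/-- The number of connected components of the spanning subgraph `(V, A)`. -/
noncomputable def numComponents {V : Type} (A : Finset (Sym2 V)) : ℕ :=
  Nat.card (SimpleGraph.fromEdgeSet (↑A : Set (Sym2 V))).ConnectedComponent

/-- The rank `r(A) = |V| - k(A)` of an edge set `A`. -/
noncomputable def edgeRank (V : Type) [Fintype V] (A : Finset (Sym2 V)) : ℕ :=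
  Fintype.card V - numComponents A

/-- The Tutte polynomial
`T(G;x,y) = Σ_{A ⊆ E} (x-1)^{r(E)-r(A)} (y-1)^{|A|-r(A)}`, evaluated at `(x,y)`. -/
noncomputable def tutte {V : Type} [Fintype V] [DecidableEq V]
    (G : SimpleGraph V) [DecidableRel G.Adj] (x y : ℝ) : ℝ :=
  ∑ A ∈ G.edgeFinset.powerset,
    (x - 1) ^ (edgeRank V G.edgeFinset - edgeRank V A) * (y - 1) ^ (A.card - edgeRank V A)

variable {V : Type}

lemma const_of_reachable {β : Type} {G : SimpleGraph V} {f : V → β}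
    (hf : ∀ u v, G.Adj u v → f u = f v) {a b : V} (h : G.Reachable a b) : f a = f b := by
  obtain ⟨w⟩ := h
  induction w with
  | nil => rfl
  | cons h p ih => exact (hf _ _ h).trans ih

lemma reach_insert {A : Set (Sym2 V)} {u v a b : V}
    (h : (SimpleGraph.fromEdgeSet (insert s(u,v) A)).Reachable a b) :
    (SimpleGraph.fromEdgeSet A).Reachable a b ∨
      ((SimpleGraph.fromEdgeSet A).Reachable a u ∧ (SimpleGraph.fromEdgeSet A).Reachable v b) ∨
      ((SimpleGraph.fromEdgeSet A).Reachable a v ∧ (SimpleGraph.fromEdgeSet A).Reachable u b) := by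
  obtain ⟨w⟩ := h
  induction w with
  | nil => exact Or.inl (Reachable.refl _)
  | @cons x y z hxy p ih =>
    rw [fromEdgeSet_adj, Set.mem_insert_iff] at hxy
    obtain ⟨hm | hm, hne⟩ := hxy
    · rw [Sym2.eq_iff] at hm
      obtain ⟨rfl, rfl⟩ | ⟨rfl, rfl⟩ := hm
      · rcases ih with h1 | ⟨h1, h2⟩ | ⟨h1, h2⟩
        · exact Or.inr (Or.inl ⟨Reachable.refl _, h1⟩)
        · exact Or.inr (Or.inl ⟨Reachable.refl _, h2⟩)
        · exact Or.inl h2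
      · rcases ih with h1 | ⟨h1, h2⟩ | ⟨h1, h2⟩
        · exact Or.inr (Or.inr ⟨Reachable.refl _, h1⟩)
        · exact Or.inl h2
        · exact Or.inr (Or.inr ⟨Reachable.refl _, h2⟩)
    · have hadj : (SimpleGraph.fromEdgeSet A).Adj x y := (fromEdgeSet_adj _).2 ⟨hm, hne⟩
      rcases ih with h1 | ⟨h1, h2⟩ | ⟨h1, h2⟩
      · exact Or.inl (hadj.reachable.trans h1)
      · exact Or.inr (Or.inl ⟨hadj.reachable.trans h1, h2⟩)
      · exact Or.inr (Or.inr ⟨hadj.reachable.trans h1, h2⟩)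

lemma numComponents_le_card [Fintype V] (A : Finset (Sym2 V)) :
    numComponents A ≤ Fintype.card V := by
  rw [← Nat.card_eq_fintype_card]
  exact Nat.card_le_card_of_surjective
    (SimpleGraph.fromEdgeSet (↑A : Set (Sym2 V))).connectedComponentMk
    (fun c => c.exists_rep)

lemma numComponents_mono [Fintype V] {A B : Finset (Sym2 V)} (h : A ⊆ B) :
    numComponents B ≤ numComponents A := by
  apply Nat.card_le_card_of_surjective
    (SimpleGraph.ConnectedComponent.map
      (SimpleGraph.Hom.ofLE (fromEdgeSet_mono (by exact_mod_cast h))))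
  intro c
  obtain ⟨v, rfl⟩ := c.exists_rep
  exact ⟨SimpleGraph.connectedComponentMk _ v, rfl⟩

lemma numComponents_empty [Fintype V] : numComponents (∅ : Finset (Sym2 V)) = Fintype.card V := by
  unfold numComponents
  rw [show ((∅ : Finset (Sym2 V)) : Set (Sym2 V)) = ∅ by simp, fromEdgeSet_empty,
    ← Nat.card_eq_fintype_card]
  symm
  apply Nat.card_eq_of_bijective (SimpleGraph.connectedComponentMk _)
  constructor
  · intro a b hab
    exact reachable_bot.mp (SimpleGraph.ConnectedComponent.exact hab)
  · exact fun c => c.exists_rep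

lemma numComponents_insert_plus_one [Fintype V] [DecidableEq V] (e : Sym2 V) (A : Finset (Sym2 V)) :
    numComponents A ≤ numComponents (insert e A) + 1 := by
  classical
  induction e using Sym2.inductionOn with
  | hf u v =>
  set G1 := SimpleGraph.fromEdgeSet (↑A : Set (Sym2 V)) with hG1
  set G2 := SimpleGraph.fromEdgeSet (↑(insert s(u,v) A) : Set (Sym2 V)) with hG2
  have hle : G1 ≤ G2 := fromEdgeSet_mono (by simp)
  have hcoe : (↑(insert s(u,v) A) : Set (Sym2 V)) = insert s(u,v) (↑A : Set (Sym2 V)) := by simp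
  let φ : G1.ConnectedComponent → G2.ConnectedComponent :=
    SimpleGraph.ConnectedComponent.map (SimpleGraph.Hom.ofLE hle)
  let ψ : G1.ConnectedComponent → G2.ConnectedComponent ⊕ Unit :=
    fun c => if c = G1.connectedComponentMk v then Sum.inr () else Sum.inl (φ c)
  have hψ : Function.Injective ψ := by
    intro c1 c2 h12
    obtain ⟨a, rfl⟩ := c1.exists_rep
    obtain ⟨b, rfl⟩ := c2.exists_rep
    simp only [ψ] at h12
    by_cases h1 : (Quot.mk G1.Reachable a : G1.ConnectedComponent) = G1.connectedComponentMk v <;>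
      by_cases h2 : (Quot.mk G1.Reachable b : G1.ConnectedComponent) = G1.connectedComponentMk v
    · exact h1.trans h2.symm
    · erw [if_pos h1, if_neg h2] at h12; exact absurd h12 (by simp)
    · erw [if_neg h1, if_pos h2] at h12; exact absurd h12 (by simp)
    · erw [if_neg h1, if_neg h2] at h12
      have h12' : φ (Quot.mk G1.Reachable a) = φ (Quot.mk G1.Reachable b) := Sum.inl.inj h12
      have hreach : G2.Reachable a b := by
        have := SimpleGraph.ConnectedComponent.exact h12'
        simpa [φ] using this
      rw [hG2, hcoe] at hreach
      rcases reach_insert hreach with hr | ⟨hr1, hr2⟩ | ⟨hr1, hr2⟩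
      · exact SimpleGraph.ConnectedComponent.sound hr
      · exact absurd (SimpleGraph.ConnectedComponent.sound hr2.symm) h2
      · exact absurd (SimpleGraph.ConnectedComponent.sound hr1) h1
  calc numComponents A ≤ Nat.card (G2.ConnectedComponent ⊕ Unit) :=
        Nat.card_le_card_of_injective ψ hψ
    _ = Nat.card G2.ConnectedComponent + 1 := by rw [Nat.card_sum]; simp
    _ = numComponents (insert s(u,v) A) + 1 := rfl

lemma card_le_numComponents_add [Fintype V] [DecidableEq V] (A : Finset (Sym2 V)) :
    Fintype.card V ≤ numComponents A + A.card := by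
  classical
  induction A using Finset.induction_on with
  | empty => simp [numComponents_empty]
  | @insert e A he ih =>
    rw [Finset.card_insert_of_notMem he]
    have := numComponents_insert_plus_one e A
    omega

lemma card_const_on_edges [Fintype V] (A : Finset (Sym2 V)) :
    Nat.card {f : V → Fin 3 // ∀ e ∈ A, (e.map f).IsDiag} = 3 ^ numComponents A := by
  classical
  set G := SimpleGraph.fromEdgeSet (↑A : Set (Sym2 V)) with hG
  have key : ∀ (f : V → Fin 3), (∀ e ∈ A, (e.map f).IsDiag) ↔ (∀ u v, G.Adj u v → f u = f v) := by
    intro f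
    constructor
    · intro hf u v huv
      rw [hG, fromEdgeSet_adj] at huv
      have := hf _ huv.1
      rwa [Sym2.map_pair_eq, Sym2.mk_isDiag_iff] at this
    · intro hf e he
      induction e using Sym2.inductionOn with
      | hf u v =>
        rw [Sym2.map_pair_eq, Sym2.mk_isDiag_iff]
        by_cases huv : u = v
        · rw [huv]
        · exact hf u v ((fromEdgeSet_adj _).2 ⟨by exact_mod_cast he, huv⟩)
  have equiv : {f : V → Fin 3 // ∀ e ∈ A, (e.map f).IsDiag} ≃ (G.ConnectedComponent → Fin 3) := by
    refine
      { toFun := fun f => Quot.lift f.1 (fun a b h => const_of_reachable ((key f.1).mp f.2) h)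
        invFun := fun g => ⟨fun v => g (G.connectedComponentMk v), ?_⟩
        left_inv := fun f => Subtype.ext (funext fun v => rfl)
        right_inv := fun g => funext fun c => ?_ }
    · rw [key]
      intro u v huv
      exact congrArg g (SimpleGraph.ConnectedComponent.sound huv.reachable)
    · obtain ⟨v, rfl⟩ := c.exists_rep
      rfl
  rw [Nat.card_congr equiv, Nat.card_fun]
  simp [numComponents, ← hG]

lemma incl_excl [Fintype V] [DecidableEq V] (G : SimpleGraph V) [DecidableRel G.Adj] :
    (Nat.card {f : V → Fin 3 // ∀ u v : V, G.Adj u v → f u ≠ f v} : ℝ) =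
      ∑ A ∈ G.edgeFinset.powerset, (-1 : ℝ) ^ A.card * 3 ^ numComponents A := by
  classical
  have hproper : ∀ f : V → Fin 3,
      (∀ u v : V, G.Adj u v → f u ≠ f v) ↔ ∀ e ∈ G.edgeFinset, ¬ (Sym2.map f e).IsDiag := by
    intro f
    constructor
    · intro hf e he
      induction e using Sym2.inductionOn with
      | hf u v =>
        rw [Sym2.map_pair_eq, Sym2.mk_isDiag_iff]
        exact hf u v (by rwa [SimpleGraph.mem_edgeFinset, SimpleGraph.mem_edgeSet] at he)
    · intro hf u v huv
      have := hf s(u,v) (by rwa [SimpleGraph.mem_edgeFinset, SimpleGraph.mem_edgeSet])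
      rwa [Sym2.map_pair_eq, Sym2.mk_isDiag_iff] at this
  have step1 : (Nat.card {f : V → Fin 3 // ∀ u v : V, G.Adj u v → f u ≠ f v} : ℝ) =
      ∑ f : V → Fin 3, if (∀ u v : V, G.Adj u v → f u ≠ f v) then (1:ℝ) else 0 := by
    rw [Finset.sum_boole, Nat.card_eq_fintype_card, Fintype.card_subtype]
  have step2 : ∀ f : V → Fin 3, (if (∀ u v : V, G.Adj u v → f u ≠ f v) then (1:ℝ) else 0) =
      ∏ e ∈ G.edgeFinset, ((-(if (Sym2.map f e).IsDiag then (1:ℝ) else 0)) + 1) := by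
    intro f
    have h1 : ∀ e : Sym2 V, (-(if (Sym2.map f e).IsDiag then (1:ℝ) else 0)) + 1 =
        if ¬ (Sym2.map f e).IsDiag then (1:ℝ) else 0 := by
      intro e; by_cases h : (Sym2.map f e).IsDiag <;> simp [h]
    simp_rw [h1, Finset.prod_boole]
    by_cases hp : ∀ u v : V, G.Adj u v → f u ≠ f v
    · rw [if_pos hp, if_pos ((hproper f).mp hp)]
    · rw [if_neg hp, if_neg (fun h => hp ((hproper f).mpr h))]
  rw [step1]
  simp_rw [step2, Finset.prod_add]
  rw [Finset.sum_comm]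
  refine Finset.sum_congr rfl fun A hA => ?_
  have hconst : ∀ f : V → Fin 3,
      (∏ e ∈ A, -(if (Sym2.map f e).IsDiag then (1:ℝ) else 0)) * ∏ e ∈ G.edgeFinset \ A, (1:ℝ) =
      (-1:ℝ) ^ A.card * (if (∀ e ∈ A, (Sym2.map f e).IsDiag) then (1:ℝ) else 0) := by
    intro f
    rw [Finset.prod_const_one, mul_one,
      Finset.prod_congr rfl fun e _ => neg_eq_neg_one_mul (if (Sym2.map f e).IsDiag then (1:ℝ) else 0),
      Finset.prod_mul_distrib, Finset.prod_const, Finset.prod_boole]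
    split_ifs with h <;> rfl
  simp_rw [hconst]
  rw [← Finset.mul_sum, Finset.sum_boole]
  congr 1
  norm_cast
  rw [← card_const_on_edges A, Nat.card_eq_fintype_card, Fintype.card_subtype]

/-- The number of proper 3-colorings of a finite simple graph `G` equals
`(-1)^{r(E)} · 3^{k(E)} · T(G; -2, 0)`. -/
theorem number_of_proper_three_colorings {V : Type} [Fintype V] [DecidableEq V]
    (G : SimpleGraph V) [DecidableRel G.Adj] :
    (Nat.card {f : V → Fin 3 // ∀ u v : V, G.Adj u v → f u ≠ f v} : ℝ) =
      (-1) ^ (edgeRank V G.edgeFinset) * 3 ^ (numComponents G.edgeFinset) *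
        tutte G (-2) 0 := by
  classical
  rw [incl_excl, _root_.tutte, Finset.mul_sum]
  refine Finset.sum_congr rfl fun A hA => ?_
  rw [Finset.mem_powerset] at hA
  have hm := numComponents_mono hA
  have hn := numComponents_le_card A
  have hnE := numComponents_le_card G.edgeFinset
  have hr := card_le_numComponents_add A
  unfold edgeRank
  set n := Fintype.card V with hn'
  set kA := numComponents A with hkA
  set kE := numComponents G.edgeFinset with hkE
  have e1 : n - kE - (n - kA) = kA - kE := by omega
  have e2 : A.card - (n - kA) = A.card + kA - n := by omega
  have e3 : kE + (kA - kE) = kA := by omega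
  have e4 : (n - kE) + ((kA - kE) + (A.card + kA - n)) = A.card + 2 * (kA - kE) := by omega
  rw [e1, e2, show (-2 - 1 : ℝ) = -3 by norm_num, show (0 - 1 : ℝ) = -1 by norm_num,
    show (-3 : ℝ) = -1 * 3 by norm_num, mul_pow]
  have : (-1 : ℝ) ^ (n - kE) * 3 ^ kE *
      ((-1) ^ (kA - kE) * 3 ^ (kA - kE) * (-1) ^ (A.card + kA - n)) =
      (-1 : ℝ) ^ ((n - kE) + ((kA - kE) + (A.card + kA - n))) * 3 ^ (kE + (kA - kE)) := by
    ring
  rw [this, e3, e4, pow_add, pow_mul]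
  norm_num
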